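/- For the network without hidden layer with W = { w ∈ ℝ^d : ‖w‖₂ ≤ B₁ } and inputs satisfying ‖x‖₂ ≤ B₂, the dropout Rademacher complexity of dropout of units satisfies 𝔑_n(F_W^{(I)}) ≤ B₁B₂√(ρ/n), where F_W^{(I)} = { (x,r) ↦ ⟨w, x⊙r⟩ : w ∈ W } and r ∈ {0,1}^d has entries i.i.d. Bern(ρ). -/

import Mathlib

open MeasureTheory Finset

noncomputable section

/-- `0/1` dropout mask as a real number. -/
def mask (b : Bool) : ℝ := if b then 1 else 0

/-- Rademacher sign `±1`. -/
def sgn (b : Bool) : ℝ := if b then 1 else -1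

/-- Probability of a single `Bern(ρ)` coordinate. -/
def bw (ρ : ℝ) (b : Bool) : ℝ := if b then ρ else 1 - ρ

/-- Empirical dropout Rademacher complexity of a class of functions on
`X × R` indexed by weights `w ∈ WS`, on sample `xs` and dropout variables `rs`.
The expectation over the i.i.d. uniform signs is the average over all `2ⁿ`
sign patterns. -/
def empRadW {Wt X R : Type*} (n : ℕ) (WS : Set Wt)
    (F : Wt → X → R → ℝ) (xs : Fin n → X) (rs : Fin n → R) : ℝ :=
  (∑ ε : Fin n → Bool,
      sSup {v : ℝ | ∃ w ∈ WS,
        v = (1 / (n : ℝ)) * ∑ i, sgn (ε i) * F w (xs i) (rs i)}) / 2 ^ n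

/-- The (expected) dropout Rademacher complexity `𝔑ₙ`: the expectation, over the
i.i.d. sample `xs ~ DXⁿ` and the i.i.d. dropout variables `rs` (each distributed
according to the finite Bernoulli-product law with weights `wt`), of the empirical
dropout Rademacher complexity. -/
def radC {Wt R : Type*} [Fintype R] (n d : ℕ) (DX : Measure (Fin d → ℝ))
    (WS : Set Wt) (wt : R → ℝ) (F : Wt → (Fin d → ℝ) → R → ℝ) : ℝ :=
  ∫ xs : Fin n → Fin d → ℝ,
      ∑ rs : Fin n → R, (∏ i, wt (rs i)) * empRadW n WS F xs rs
    ∂(Measure.pi fun _ => DX)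

/-- Weight class of the no-hidden-layer network: the `ℓ₂` ball of radius `B₁`. -/
def linW (d : ℕ) (B₁ : ℝ) : Set (Fin d → ℝ) :=
  {w | Real.sqrt (∑ j, w j ^ 2) ≤ B₁}

/-- Type (I) dropout (dropout of units) output of the no-hidden-layer network:
`(x, r) ↦ ⟨w, x⊙r⟩`. -/
def linFI (d : ℕ) : (Fin d → ℝ) → (Fin d → ℝ) → (Fin d → Bool) → ℝ :=
  fun w x r => ∑ j, w j * (x j * mask (r j))

/-- Type (II) dropout (dropout of weights) output of the no-hidden-layer network:
`(x, r) ↦ ⟨w⊙r, x⟩`. -/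
def linFII (d : ℕ) : (Fin d → ℝ) → (Fin d → ℝ) → (Fin d → Bool) → ℝ :=
  fun w x r => ∑ j, (w j * mask (r j)) * x j

/-- Type (III) dropout (dropout of both weights and units) output of the
no-hidden-layer network: `(x, (r₁, r₂)) ↦ ⟨w⊙r₁, x⊙r₂⟩`. -/
def linFIII (d : ℕ) :
    (Fin d → ℝ) → (Fin d → ℝ) → (Fin d → Bool) × (Fin d → Bool) → ℝ :=
  fun w x r => ∑ j, (w j * mask (r.1 j)) * (x j * mask (r.2 j))

/-- Bernoulli product weight of a dropout vector `r ∈ {0,1}^d`. -/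
def wtVec (d : ℕ) (ρ : ℝ) (r : Fin d → Bool) : ℝ := ∏ j, bw ρ (r j)

/-- Bernoulli product weight of a pair of dropout vectors. -/
def wtPair (d : ℕ) (ρ : ℝ) (r : (Fin d → Bool) × (Fin d → Bool)) : ℝ :=
  (∏ j, bw ρ (r.1 j)) * ∏ j, bw ρ (r.2 j)

end

section Aux

lemma sum_pi_prod {ι κ : Type*} [Fintype ι] [DecidableEq ι] [Fintype κ] (f : ι → κ → ℝ) :
    ∑ g : ι → κ, ∏ i, f i (g i) = ∏ i, ∑ k, f i k :=
  (Fintype.prod_sum (κ := fun _ => κ) f).symm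

lemma sgn_orth {n : ℕ} (i k : Fin n) :
    ∑ ε : Fin n → Bool, sgn (ε i) * sgn (ε k) = if i = k then (2:ℝ)^n else 0 := by
  by_cases h : i = k
  · subst h
    rw [if_pos rfl]
    have h1 : ∀ ε : Fin n → Bool, sgn (ε i) * sgn (ε i) = 1 := fun ε => by
      cases ε i <;> simp [sgn]
    simp only [h1, Finset.sum_const, Finset.card_univ, nsmul_eq_mul, mul_one]
    simp [Fintype.card_fun]
  · rw [if_neg h]
    have hrw : ∀ ε : Fin n → Bool,
        sgn (ε i) * sgn (ε k) = ∏ m, (if m = i ∨ m = k then sgn (ε m) else 1) := by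
      intro ε
      rw [← Finset.mul_prod_erase Finset.univ _ (Finset.mem_univ i)]
      rw [← Finset.mul_prod_erase _ _
        (Finset.mem_erase.mpr ⟨fun e => h e.symm, Finset.mem_univ k⟩)]
      have h1 : ∏ m ∈ (Finset.univ.erase i).erase k,
          (if m = i ∨ m = k then sgn (ε m) else 1) = 1 := by
        refine Finset.prod_eq_one fun m hm => ?_
        simp only [Finset.mem_erase] at hm
        simp [hm.1, hm.2.1]
      rw [h1]
      simp
    calc ∑ ε : Fin n → Bool, sgn (ε i) * sgn (ε k)
        = ∑ ε : Fin n → Bool, ∏ m, (if m = i ∨ m = k then sgn (ε m) else 1) :=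
          Finset.sum_congr rfl fun ε _ => hrw ε
      _ = ∏ m, ∑ b : Bool, (if m = i ∨ m = k then sgn b else 1) := sum_pi_prod (fun m b => if m = i ∨ m = k then sgn b else 1)
      _ = 0 := by
          refine Finset.prod_eq_zero (Finset.mem_univ i) ?_
          simp [sgn]

lemma rad_orth {n : ℕ} (c : Fin n → ℝ) :
    ∑ ε : Fin n → Bool, (∑ i, sgn (ε i) * c i)^2 = 2^n * ∑ i, c i ^ 2 := by
  calc ∑ ε : Fin n → Bool, (∑ i, sgn (ε i) * c i)^2
      = ∑ ε : Fin n → Bool, ∑ i, ∑ k, (c i * c k) * (sgn (ε i) * sgn (ε k)) := by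
        refine Finset.sum_congr rfl fun ε _ => ?_
        rw [sq, Finset.sum_mul_sum]
        exact Finset.sum_congr rfl fun i _ => Finset.sum_congr rfl fun k _ => by ring
    _ = ∑ i, ∑ k, (c i * c k) * (∑ ε : Fin n → Bool, sgn (ε i) * sgn (ε k)) := by
        rw [Finset.sum_comm]
        refine Finset.sum_congr rfl fun i _ => ?_
        rw [Finset.sum_comm]
        exact Finset.sum_congr rfl fun k _ => by rw [← Finset.mul_sum]
    _ = ∑ i, (c i * c i) * (2:ℝ)^n := by
        refine Finset.sum_congr rfl fun i _ => ?_
        rw [Finset.sum_eq_single i]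
        · rw [sgn_orth, if_pos rfl]
        · intro k _ hk
          rw [sgn_orth, if_neg (fun e => hk e.symm), mul_zero]
        · intro hi; exact absurd (Finset.mem_univ i) hi
    _ = 2^n * ∑ i, c i ^ 2 := by
        rw [Finset.mul_sum]
        exact Finset.sum_congr rfl fun i _ => by ring

lemma expect_single {ι κ : Type*} [Fintype ι] [DecidableEq ι] [Fintype κ]
    (f h : κ → ℝ) (hf : ∑ k, f k = 1) (i0 : ι) :
    ∑ g : ι → κ, (∏ i, f (g i)) * h (g i0) = ∑ k, f k * h k := by
  have key : ∀ g : ι → κ,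
      (∏ i, f (g i)) * h (g i0) = ∏ i, (f (g i) * (if i = i0 then h (g i) else 1)) := by
    intro g
    rw [Finset.prod_mul_distrib]
    congr 1
    simp [Finset.prod_ite_eq']
  rw [Finset.sum_congr rfl fun g _ => key g]
  rw [show (∑ g : ι → κ, ∏ i, (f (g i) * (if i = i0 then h (g i) else 1)))
      = ∏ i, ∑ k, (f k * (if i = i0 then h k else 1)) from
    sum_pi_prod (fun i k => f k * (if i = i0 then h k else 1))]
  have h2 : ∀ i : ι, (∑ k, f k * (if i = i0 then h k else 1))
      = if i = i0 then ∑ k, f k * h k else 1 := by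
    intro i
    by_cases hi : i = i0 <;> simp [hi, hf]
  rw [Finset.prod_congr rfl fun i _ => h2 i]
  simp [Finset.prod_ite_eq']


lemma bw_nonneg {ρ : ℝ} (hρ0 : 0 ≤ ρ) (hρ1 : ρ ≤ 1) (b : Bool) : 0 ≤ bw ρ b := by
  cases b <;> simp [bw] <;> linarith

lemma bw_sum {ρ : ℝ} : ∑ b : Bool, bw ρ b = 1 := by
  simp [bw]

lemma mask_sq_expect {ρ : ℝ} : ∑ b : Bool, bw ρ b * mask b ^ 2 = ρ := by
  simp [bw, mask]

lemma wtVec_nonneg {d : ℕ} {ρ : ℝ} (hρ0 : 0 ≤ ρ) (hρ1 : ρ ≤ 1) (r : Fin d → Bool) :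
    0 ≤ wtVec d ρ r :=
  Finset.prod_nonneg fun j _ => bw_nonneg hρ0 hρ1 (r j)

lemma wtVec_sum {d : ℕ} {ρ : ℝ} : ∑ r : Fin d → Bool, wtVec d ρ r = 1 := by
  calc ∑ r : Fin d → Bool, wtVec d ρ r
      = ∏ _j : Fin d, ∑ b : Bool, bw ρ b := sum_pi_prod (fun _ b => bw ρ b)
    _ = 1 := by rw [Finset.prod_congr rfl fun j _ => (bw_sum (ρ := ρ))]; simp

lemma mask_marginal {d : ℕ} {ρ : ℝ} (j : Fin d) :
    ∑ r : Fin d → Bool, wtVec d ρ r * mask (r j) ^ 2 = ρ := by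
  calc ∑ r : Fin d → Bool, wtVec d ρ r * mask (r j) ^ 2
      = ∑ b : Bool, bw ρ b * mask b ^ 2 :=
        expect_single (bw ρ) (fun b => mask b ^ 2) bw_sum j
    _ = ρ := mask_sq_expect

lemma empRadW_le (d n : ℕ) (hn : 0 < n) (B₁ : ℝ) (hB₁ : 0 ≤ B₁)
    (xs : Fin n → Fin d → ℝ) (rs : Fin n → Fin d → Bool) :
    empRadW n (linW d B₁) (linFI d) xs rs
      ≤ (B₁ / n) * Real.sqrt (∑ i, ∑ j, (xs i j * mask (rs i j)) ^ 2) := by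
  have hn' : (0:ℝ) < n := by exact_mod_cast hn
  have stepA : ∀ ε : Fin n → Bool,
      sSup {v : ℝ | ∃ w ∈ linW d B₁,
          v = (1 / (n : ℝ)) * ∑ i, sgn (ε i) * linFI d w (xs i) (rs i)}
        ≤ (1 / (n:ℝ)) * (B₁ * Real.sqrt (∑ j,
            (∑ i, sgn (ε i) * (xs i j * mask (rs i j))) ^ 2)) := by
    intro ε
    refine Real.sSup_le ?_ (by positivity)
    rintro v ⟨w, hw, rfl⟩
    have hrw : ∑ i, sgn (ε i) * linFI d w (xs i) (rs i)
        = ∑ j, w j * (∑ i, sgn (ε i) * (xs i j * mask (rs i j))) := by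
      simp only [linFI, Finset.mul_sum]
      rw [Finset.sum_comm]
      refine Finset.sum_congr rfl fun j _ => ?_
      exact Finset.sum_congr rfl fun i _ => by ring
    rw [hrw]
    have cs := Real.sum_mul_le_sqrt_mul_sqrt Finset.univ w
      (fun j => ∑ i, sgn (ε i) * (xs i j * mask (rs i j)))
    have hw' : Real.sqrt (∑ j, w j ^ 2) ≤ B₁ := hw
    have h2 : ∑ j, w j * (∑ i, sgn (ε i) * (xs i j * mask (rs i j)))
        ≤ B₁ * Real.sqrt (∑ j, (∑ i, sgn (ε i) * (xs i j * mask (rs i j))) ^ 2) :=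
      cs.trans (mul_le_mul_of_nonneg_right hw' (Real.sqrt_nonneg _))
    exact mul_le_mul_of_nonneg_left h2 (by positivity)
  have hSqsum : (∑ ε : Fin n → Bool, ∑ j,
      (∑ i, sgn (ε i) * (xs i j * mask (rs i j))) ^ 2)
      = 2 ^ n * ∑ i, ∑ j, (xs i j * mask (rs i j)) ^ 2 := by
    rw [Finset.sum_comm]
    rw [Finset.sum_congr rfl fun j _ => rad_orth (fun i => xs i j * mask (rs i j))]
    rw [← Finset.mul_sum, Finset.sum_comm]
  have CS2 : (∑ ε : Fin n → Bool, Real.sqrt (∑ j,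
        (∑ i, sgn (ε i) * (xs i j * mask (rs i j))) ^ 2))
      ≤ 2 ^ n * Real.sqrt (∑ i, ∑ j, (xs i j * mask (rs i j)) ^ 2) := by
    have cs := Real.sum_mul_le_sqrt_mul_sqrt Finset.univ (fun _ : Fin n → Bool => (1:ℝ))
      (fun ε => Real.sqrt (∑ j, (∑ i, sgn (ε i) * (xs i j * mask (rs i j))) ^ 2))
    simp only [one_mul, one_pow] at cs
    have hsq : ∀ ε : Fin n → Bool,
        Real.sqrt (∑ j, (∑ i, sgn (ε i) * (xs i j * mask (rs i j))) ^ 2) ^ 2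
        = ∑ j, (∑ i, sgn (ε i) * (xs i j * mask (rs i j))) ^ 2 := fun ε =>
      Real.sq_sqrt (by positivity)
    rw [Finset.sum_congr rfl fun ε _ => hsq ε, hSqsum] at cs
    have hcard : (∑ _ε : Fin n → Bool, (1:ℝ)) = 2 ^ n := by
      simp [Fintype.card_fun]
    rw [hcard] at cs
    calc (∑ ε : Fin n → Bool, Real.sqrt (∑ j,
            (∑ i, sgn (ε i) * (xs i j * mask (rs i j))) ^ 2))
        ≤ Real.sqrt (2 ^ n) * Real.sqrt (2 ^ n *
            ∑ i, ∑ j, (xs i j * mask (rs i j)) ^ 2) := cs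
      _ = 2 ^ n * Real.sqrt (∑ i, ∑ j, (xs i j * mask (rs i j)) ^ 2) := by
          rw [Real.sqrt_mul (by positivity), ← mul_assoc,
            Real.mul_self_sqrt (by positivity)]
  have h2n : (0:ℝ) < 2 ^ n := by positivity
  calc empRadW n (linW d B₁) (linFI d) xs rs
      = (∑ ε : Fin n → Bool,
          sSup {v : ℝ | ∃ w ∈ linW d B₁,
            v = (1 / (n : ℝ)) * ∑ i, sgn (ε i) * linFI d w (xs i) (rs i)}) / 2 ^ n := rfl
    _ ≤ (∑ ε : Fin n → Bool, (1 / (n:ℝ)) * (B₁ * Real.sqrt (∑ j,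
          (∑ i, sgn (ε i) * (xs i j * mask (rs i j))) ^ 2))) / 2 ^ n := by
        gcongr with ε _
        exact stepA ε
    _ = ((1 / (n:ℝ)) * B₁) * ((∑ ε : Fin n → Bool, Real.sqrt (∑ j,
          (∑ i, sgn (ε i) * (xs i j * mask (rs i j))) ^ 2)) / 2 ^ n) := by
        simp only [← Finset.mul_sum]
        ring
    _ ≤ ((1 / (n:ℝ)) * B₁) * ((2 ^ n * Real.sqrt (∑ i, ∑ j,
          (xs i j * mask (rs i j)) ^ 2)) / 2 ^ n) := by
        have hb : 0 ≤ (1 / (n:ℝ)) * B₁ := by positivity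
        exact mul_le_mul_of_nonneg_left (by gcongr) hb
    _ = (B₁ / n) * Real.sqrt (∑ i, ∑ j, (xs i j * mask (rs i j)) ^ 2) := by
        field_simp
        try ring

lemma key_bound (d n : ℕ) (hn : 0 < n) (ρ B₁ B₂ : ℝ)
    (hρ0 : 0 ≤ ρ) (hρ1 : ρ ≤ 1) (hB₁ : 0 ≤ B₁) (hB₂ : 0 ≤ B₂)
    (xs : Fin n → Fin d → ℝ) (hxs : ∀ i, Real.sqrt (∑ j, xs i j ^ 2) ≤ B₂) :
    ∑ rs : Fin n → Fin d → Bool,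
        (∏ i, wtVec d ρ (rs i)) * empRadW n (linW d B₁) (linFI d) xs rs
      ≤ B₁ * B₂ * Real.sqrt (ρ / n) := by
  have hn' : (0:ℝ) < n := by exact_mod_cast hn
  have hW0 : ∀ rs : Fin n → Fin d → Bool, 0 ≤ ∏ i, wtVec d ρ (rs i) :=
    fun rs => Finset.prod_nonneg fun i _ => wtVec_nonneg hρ0 hρ1 (rs i)
  have hWsum : ∑ rs : Fin n → Fin d → Bool, ∏ i, wtVec d ρ (rs i) = 1 := by
    calc ∑ rs : Fin n → Fin d → Bool, ∏ i, wtVec d ρ (rs i)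
        = ∏ _i : Fin n, ∑ r : Fin d → Bool, wtVec d ρ r :=
          sum_pi_prod (fun _ r => wtVec d ρ r)
      _ = 1 := by rw [Finset.prod_congr rfl fun i _ => (wtVec_sum (d := d) (ρ := ρ))]; simp
  have hT0 : ∀ rs : Fin n → Fin d → Bool,
      0 ≤ ∑ i, ∑ j, (xs i j * mask (rs i j)) ^ 2 := fun rs => by positivity
  have step4 : (∑ rs : Fin n → Fin d → Bool, (∏ i, wtVec d ρ (rs i)) *
        (∑ i, ∑ j, (xs i j * mask (rs i j)) ^ 2))
      = ∑ i : Fin n, ρ * ∑ j, xs i j ^ 2 := by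
    calc (∑ rs : Fin n → Fin d → Bool, (∏ i, wtVec d ρ (rs i)) *
          (∑ i, ∑ j, (xs i j * mask (rs i j)) ^ 2))
        = ∑ rs : Fin n → Fin d → Bool, ∑ i, ∑ j,
            xs i j ^ 2 * ((∏ i', wtVec d ρ (rs i')) * mask (rs i j) ^ 2) := by
          refine Finset.sum_congr rfl fun rs _ => ?_
          rw [Finset.mul_sum]
          refine Finset.sum_congr rfl fun i _ => ?_
          rw [Finset.mul_sum]
          exact Finset.sum_congr rfl fun j _ => by ring
      _ = ∑ i, ∑ j, xs i j ^ 2 * (∑ rs : Fin n → Fin d → Bool,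
            (∏ i', wtVec d ρ (rs i')) * mask (rs i j) ^ 2) := by
          rw [Finset.sum_comm]
          refine Finset.sum_congr rfl fun i _ => ?_
          rw [Finset.sum_comm]
          refine Finset.sum_congr rfl fun j _ => ?_
          rw [← Finset.mul_sum]
      _ = ∑ i, ∑ j, xs i j ^ 2 * ρ := by
          refine Finset.sum_congr rfl fun i _ => Finset.sum_congr rfl fun j _ => ?_
          congr 1
          calc (∑ rs : Fin n → Fin d → Bool,
                (∏ i', wtVec d ρ (rs i')) * mask (rs i j) ^ 2)
              = ∑ r : Fin d → Bool, wtVec d ρ r * mask (r j) ^ 2 :=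
                expect_single (wtVec d ρ) (fun r => mask (r j) ^ 2) wtVec_sum i
            _ = ρ := mask_marginal j
      _ = ∑ i : Fin n, ρ * ∑ j, xs i j ^ 2 := by
          refine Finset.sum_congr rfl fun i _ => ?_
          rw [Finset.mul_sum]
          exact Finset.sum_congr rfl fun j _ => by ring
  have hfinal : (B₁ / n) * Real.sqrt ((n:ℝ) * (ρ * B₂ ^ 2))
      = B₁ * B₂ * Real.sqrt (ρ / n) := by
    have h1 : Real.sqrt ((n:ℝ) * (ρ * B₂ ^ 2)) = Real.sqrt ((n:ℝ) * ρ) * B₂ := by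
      rw [show (n:ℝ) * (ρ * B₂ ^ 2) = ((n:ℝ) * ρ) * B₂ ^ 2 by ring,
        Real.sqrt_mul (by positivity), Real.sqrt_sq hB₂]
    have h2 : Real.sqrt (ρ / n) = Real.sqrt ((n:ℝ) * ρ) / n := by
      rw [show ρ / (n:ℝ) = ((n:ℝ) * ρ) / (n:ℝ) ^ 2 by field_simp,
        Real.sqrt_div (by positivity), Real.sqrt_sq hn'.le]
    rw [h1, h2]
    ring
  calc (∑ rs : Fin n → Fin d → Bool,
          (∏ i, wtVec d ρ (rs i)) * empRadW n (linW d B₁) (linFI d) xs rs)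
      ≤ ∑ rs : Fin n → Fin d → Bool, (∏ i, wtVec d ρ (rs i)) *
          ((B₁ / n) * Real.sqrt (∑ i, ∑ j, (xs i j * mask (rs i j)) ^ 2)) := by
        refine Finset.sum_le_sum fun rs _ => ?_
        exact mul_le_mul_of_nonneg_left (empRadW_le d n hn B₁ hB₁ xs rs) (hW0 rs)
    _ = (B₁ / n) * ∑ rs : Fin n → Fin d → Bool, (∏ i, wtVec d ρ (rs i)) *
          Real.sqrt (∑ i, ∑ j, (xs i j * mask (rs i j)) ^ 2) := by
        rw [Finset.mul_sum]
        exact Finset.sum_congr rfl fun rs _ => by ring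
    _ ≤ (B₁ / n) * Real.sqrt (∑ rs : Fin n → Fin d → Bool,
          (∏ i, wtVec d ρ (rs i)) * (∑ i, ∑ j, (xs i j * mask (rs i j)) ^ 2)) := by
        refine mul_le_mul_of_nonneg_left ?_ (by positivity)
        have hrw : ∀ rs : Fin n → Fin d → Bool,
            (∏ i, wtVec d ρ (rs i)) * Real.sqrt (∑ i, ∑ j, (xs i j * mask (rs i j)) ^ 2)
            = Real.sqrt (∏ i, wtVec d ρ (rs i)) * Real.sqrt ((∏ i, wtVec d ρ (rs i)) *
                (∑ i, ∑ j, (xs i j * mask (rs i j)) ^ 2)) := fun rs => by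
          rw [Real.sqrt_mul (hW0 rs), ← mul_assoc, Real.mul_self_sqrt (hW0 rs)]
        rw [Finset.sum_congr rfl fun rs _ => hrw rs]
        have cs := Real.sum_mul_le_sqrt_mul_sqrt Finset.univ
          (fun rs : Fin n → Fin d → Bool => Real.sqrt (∏ i, wtVec d ρ (rs i)))
          (fun rs : Fin n → Fin d → Bool => Real.sqrt ((∏ i, wtVec d ρ (rs i)) *
            (∑ i, ∑ j, (xs i j * mask (rs i j)) ^ 2)))
        rw [Finset.sum_congr rfl fun rs _ => Real.sq_sqrt (hW0 rs),
          Finset.sum_congr rfl fun rs _ =>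
            Real.sq_sqrt (mul_nonneg (hW0 rs) (hT0 rs)),
          hWsum, Real.sqrt_one, one_mul] at cs
        exact cs
    _ ≤ (B₁ / n) * Real.sqrt ((n:ℝ) * (ρ * B₂ ^ 2)) := by
        refine mul_le_mul_of_nonneg_left (Real.sqrt_le_sqrt ?_) (by positivity)
        rw [step4]
        calc (∑ i : Fin n, ρ * ∑ j, xs i j ^ 2)
            ≤ ∑ _i : Fin n, ρ * B₂ ^ 2 := by
              refine Finset.sum_le_sum fun i _ => ?_
              refine mul_le_mul_of_nonneg_left ?_ hρ0
              have h1 : (∑ j, xs i j ^ 2) = Real.sqrt (∑ j, xs i j ^ 2) ^ 2 :=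
                (Real.sq_sqrt (by positivity)).symm
              rw [h1]
              exact pow_le_pow_left₀ (Real.sqrt_nonneg _) (hxs i) 2
          _ = (n:ℝ) * (ρ * B₂ ^ 2) := by
              rw [Finset.sum_const, Finset.card_univ, Fintype.card_fin, nsmul_eq_mul]
    _ = B₁ * B₂ * Real.sqrt (ρ / n) := hfinal

end Aux

/-- For the network without hidden layer, with
`W = {w : ‖w‖₂ ≤ B₁}` and inputs a.s. satisfying `‖x‖₂ ≤ B₂`, the dropout
Rademacher complexity of dropout of units satisfies
`𝔑ₙ(F_W^{(I)}) ≤ B₁ B₂ √(ρ/n)`. -/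
theorem linear_dropout_rad_units_bound (d n : ℕ) (hn : 0 < n)
    (ρ B₁ B₂ : ℝ) (hρ0 : 0 ≤ ρ) (hρ1 : ρ ≤ 1) (hB₁ : 0 ≤ B₁) (hB₂ : 0 ≤ B₂)
    (DX : Measure (Fin d → ℝ)) [IsProbabilityMeasure DX]
    (hsupp : ∀ᵐ x ∂DX, Real.sqrt (∑ j, x j ^ 2) ≤ B₂) :
    radC n d DX (linW d B₁) (wtVec d ρ) (linFI d) ≤ B₁ * B₂ * Real.sqrt (ρ / n) := by
  have hae : ∀ᵐ xs : Fin n → Fin d → ℝ ∂(Measure.pi fun _ => DX),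
      ∀ i, Real.sqrt (∑ j, xs i j ^ 2) ≤ B₂ := by
    rw [MeasureTheory.ae_all_iff]
    intro i
    exact (Measure.tendsto_eval_ae_ae (μ := fun _ : Fin n => DX) (i := i)).eventually hsupp
  have hbound : ∀ᵐ xs : Fin n → Fin d → ℝ ∂(Measure.pi fun _ => DX),
      (∑ rs : Fin n → Fin d → Bool,
        (∏ i, wtVec d ρ (rs i)) * empRadW n (linW d B₁) (linFI d) xs rs)
      ≤ B₁ * B₂ * Real.sqrt (ρ / n) :=
    hae.mono fun xs h => key_bound d n hn ρ B₁ B₂ hρ0 hρ1 hB₁ hB₂ xs h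
  have hc : 0 ≤ B₁ * B₂ * Real.sqrt (ρ / n) :=
    mul_nonneg (mul_nonneg hB₁ hB₂) (Real.sqrt_nonneg _)
  unfold radC
  by_cases hig : Integrable (fun xs : Fin n → Fin d → ℝ =>
      ∑ rs : Fin n → Fin d → Bool,
        (∏ i, wtVec d ρ (rs i)) * empRadW n (linW d B₁) (linFI d) xs rs)
      (Measure.pi fun _ => DX)
  · have h := integral_mono_ae hig (integrable_const (B₁ * B₂ * Real.sqrt (ρ / n))) hbound
    rwa [integral_const, probReal_univ, one_smul] at h
  · rw [integral_undef hig]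
    exact hc
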